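/- If H = H₁ * H₂ is a free product decomposition of a subgroup H of G and H is verbally closed in G, then H₁ is verbally closed in G (and likewise H₂). -/

import Mathlib

/-- A subgroup `H` of `G` is *verbally closed* if every coefficient-free equation
`w(x₁,…,xₙ) = h` with `h ∈ H` that has a solution in `G` also has a solution in `H`. -/
def VerballyClosed {G : Type*} [Group G] (H : Subgroup G) : Prop :=
  ∀ (n : ℕ) (w : FreeGroup (Fin n)) (h : G), h ∈ H →
    (∃ x : Fin n → G, FreeGroup.lift x w = h) →
    ∃ x : Fin n → G, (∀ i, x i ∈ H) ∧ FreeGroup.lift x w = h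

private lemma surj_aux {G : Type*} [Group G] (H H₁ H₂ : Subgroup G)
    (hsup : H₁ ⊔ H₂ = H) {g : G} (hg : g ∈ H) :
    ∃ c : Monoid.Coprod H₁ H₂, Monoid.Coprod.lift H₁.subtype H₂.subtype c = g := by
  have : H ≤ (Monoid.Coprod.lift H₁.subtype H₂.subtype).range := by
    rw [← hsup]
    refine sup_le ?_ ?_
    · intro a ha
      exact ⟨Monoid.Coprod.inl ⟨a, ha⟩, by simp⟩
    · intro a ha
      exact ⟨Monoid.Coprod.inr ⟨a, ha⟩, by simp⟩
  exact this hg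

private lemma comp_lift_aux {G P : Type*} [Group G] [Group P] {n : ℕ}
    (f : G →* P) (c : Fin n → G) (w : FreeGroup (Fin n)) :
    FreeGroup.lift (fun i => f (c i)) w = f (FreeGroup.lift c w) := by
  have : FreeGroup.lift (fun i => f (c i)) = f.comp (FreeGroup.lift c) := by
    apply FreeGroup.ext_hom
    intro i
    simp
  rw [this]; rfl

/-- If a verbally closed subgroup $H$ of $G$ decomposes as a free product $H₁ * H₂$,
then both free factors are verbally closed in $G$. -/
theorem freeFactor_verballyClosed {G : Type*} [Group G] (H H₁ H₂ : Subgroup G)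
    (hinj : Function.Injective (Monoid.Coprod.lift H₁.subtype H₂.subtype))
    (hsup : H₁ ⊔ H₂ = H)
    (hvc : VerballyClosed H) :
    VerballyClosed H₁ ∧ VerballyClosed H₂ := by
  set φ := Monoid.Coprod.lift H₁.subtype H₂.subtype with hφ
  have h1H : H₁ ≤ H := hsup ▸ le_sup_left
  have h2H : H₂ ≤ H := hsup ▸ le_sup_right
  constructor
  · intro n w h hh hex
    obtain ⟨x, hxH, hxw⟩ := hvc n w h (h1H hh) hex
    choose c hc using fun i => surj_aux H H₁ H₂ hsup (hxH i)
    set r := Monoid.Coprod.lift (MonoidHom.id H₁) (1 : H₂ →* H₁) with hr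
    refine ⟨fun i => (r (c i) : G), fun i => (r (c i)).2, ?_⟩
    have key : φ (FreeGroup.lift c w) = h := by
      rw [← comp_lift_aux φ c w]
      rw [show (fun i => φ (c i)) = x from funext hc]
      exact hxw
    have key2 : FreeGroup.lift c w = Monoid.Coprod.inl ⟨h, hh⟩ := by
      apply hinj
      rw [key]; simp [hφ]
    calc FreeGroup.lift (fun i => ((r (c i) : H₁) : G)) w
        = ((H₁.subtype.comp r) (FreeGroup.lift c w) : G) := by
          rw [← comp_lift_aux (H₁.subtype.comp r) c w]; rfl
      _ = h := by rw [key2]; simp [hr]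
  · intro n w h hh hex
    obtain ⟨x, hxH, hxw⟩ := hvc n w h (h2H hh) hex
    choose c hc using fun i => surj_aux H H₁ H₂ hsup (hxH i)
    set r := Monoid.Coprod.lift (1 : H₁ →* H₂) (MonoidHom.id H₂) with hr
    refine ⟨fun i => (r (c i) : G), fun i => (r (c i)).2, ?_⟩
    have key : φ (FreeGroup.lift c w) = h := by
      rw [← comp_lift_aux φ c w]
      rw [show (fun i => φ (c i)) = x from funext hc]
      exact hxw
    have key2 : FreeGroup.lift c w = Monoid.Coprod.inr ⟨h, hh⟩ := by
      apply hinj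
      rw [key]; simp [hφ]
    calc FreeGroup.lift (fun i => ((r (c i) : H₂) : G)) w
        = ((H₂.subtype.comp r) (FreeGroup.lift c w) : G) := by
          rw [← comp_lift_aux (H₂.subtype.comp r) c w]; rfl
      _ = h := by rw [key2]; simp [hr]
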